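/- For the second-order increment filter a = (1,-2,1) and H ∈ (0, 1/2], the ℓ¹-norm of the correlation function satisfies ∑_{j∈ℤ}|ρ_H^a(j)| = 1 + (10 - 7·4^H + 2·9^H)/(4 - 4^H), and this function of H is maximized (over H ∈ [0,1]) at H → 0⁺ with supremum value 8/3. Consequently κ^{i2} := 2·sup_{H∈(0,1)} ∑_{j∈ℤ}|ρ_H^a(j)| = 16/3. -/

import Mathlib

open Finset Real

open Filter Set Topology

lemma mvt1 (g g' : ℝ → ℝ) (a : ℝ) (hc : ContinuousOn g (Set.Icc a (a+1)))
    (h : ∀ y ∈ Set.Ioo a (a+1), HasDerivAt g (g' y) y) :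
    ∃ c ∈ Set.Ioo a (a+1), g (a+1) - g a = g' c := by
  obtain ⟨c, hc1, hc2⟩ := exists_hasDerivAt_eq_slope g g' (by linarith) hc h
  exact ⟨c, hc1, by rw [hc2]; field_simp; ring⟩

lemma hd_shift (b q y : ℝ) (h : 0 < y + b) :
    HasDerivAt (fun z => (z + b) ^ q) (q * (y + b) ^ (q - 1)) y := by
  have := ((hasDerivAt_id y).add_const b).rpow_const (p := q) (Or.inl h.ne')
  simpa using this

lemma cont_shift (b q : ℝ) (hq : 0 ≤ q) : Continuous (fun z : ℝ => (z + b) ^ q) :=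
  (continuous_iff_continuousAt.2
    (fun x => Real.continuousAt_rpow_const x q (Or.inr hq))).comp
    (continuous_id.add continuous_const)

lemma rpow_diff (q a : ℝ) (ha : 0 < a) :
    ∃ c, a < c ∧ c < a + 1 ∧ (a+1)^q - a^q = q * c^(q-1) := by
  obtain ⟨c, hc1, hc2⟩ := mvt1 (fun z => (z + 0) ^ q) (fun y => q * (y + 0) ^ (q-1)) a
    (fun y hy => ((hd_shift 0 q y (by simp; linarith [hy.1])).continuousAt).continuousWithinAt)
    (fun y hy => hd_shift 0 q y (by simp; linarith [hy.1]))
  simp only [add_zero] at hc2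
  exact ⟨c, hc1.1, hc1.2, hc2⟩

lemma secdiff (q x : ℝ) (hx : 1 < x) :
    ∃ d, x - 1 < d ∧ d < x + 1 ∧ (x+1)^q - 2*x^q + (x-1)^q = q * (q-1) * d^(q-2) := by
  have key : ∀ y ∈ Set.Icc (x-1) (x-1+1), HasDerivAt (fun z => (z+1)^q - (z+0)^q)
      (q * (y+1) ^ (q-1) - q * (y+0) ^ (q-1)) y := by
    intro y hy
    have h1 : (0:ℝ) < y + 1 := by have := hy.1; linarith
    have h0 : (0:ℝ) < y + 0 := by have := hy.1; simp; linarith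
    exact (hd_shift 1 q y h1).sub (hd_shift 0 q y h0)
  obtain ⟨c, hc1, hc2⟩ := mvt1 _ _ (x-1)
    (fun y hy => ((key y hy).continuousAt).continuousWithinAt)
    (fun y hy => key y (Set.mem_Icc.2 ⟨hy.1.le, hy.2.le⟩))
  rw [show x - 1 + 1 = x by ring] at hc1 hc2
  have hc0 : 0 < c := by have := hc1.1; linarith
  obtain ⟨d, hd1, hd2, hd3⟩ := rpow_diff (q-1) c hc0
  refine ⟨d, by linarith [hc1.1], by linarith [hc1.2], ?_⟩
  simp only [add_zero] at hc2
  have e1 : (x+1)^q - 2*x^q + (x-1)^q = q * ((c+1)^(q-1) - c^(q-1)) := by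
    rw [mul_sub]; linarith [hc2]
  rw [e1, hd3]; ring

lemma fourthdiff (q x : ℝ) (hq : 0 < q) (hx : 2 ≤ x) :
    ∃ d, 0 < d ∧ (x+2)^q - 4*(x+1)^q + 6*x^q - 4*(x-1)^q + (x-2)^q
      = q * (q-1) * (q-2) * (q-3) * d^(q-4) := by
  -- step 1 : MVT on g z = (z+2)^q - 3(z+1)^q + 3(z+0)^q - (z+(-1))^q over [x-1, x]
  obtain ⟨c₁, hc1, hc2⟩ := mvt1
      (fun z => (z+2)^q - 3*((z+1)^q) + 3*((z+0)^q) - (z+(-1))^q)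
      (fun y => q*(y+2)^(q-1) - 3*(q*(y+1)^(q-1)) + 3*(q*(y+0)^(q-1)) - q*(y+(-1))^(q-1))
      (x-1)
    (((((cont_shift 2 q hq.le).sub (continuous_const.mul (cont_shift 1 q hq.le))).add
        (continuous_const.mul (cont_shift 0 q hq.le))).sub (cont_shift (-1) q hq.le)).continuousOn)
    (fun y hy => by
      have h1 := hd_shift 2 q y (by have := hy.1; linarith)
      have h2 := hd_shift 1 q y (by have := hy.1; linarith)
      have h3 := hd_shift 0 q y (by have := hy.1; linarith)
      have h4 := hd_shift (-1) q y (by have := hy.1; linarith)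
      exact ((h1.sub (h2.const_mul 3)).add (h3.const_mul 3)).sub h4)
  rw [show x - 1 + 1 = x by ring] at hc1 hc2
  -- step 2 : MVT on h z = (z+1)^(q-1) - 2(z+0)^(q-1) + (z+(-1))^(q-1) over [c₁, c₁+1]
  have hc₁1 : 1 < c₁ := by have := hc1.1; linarith
  have key2 : ∀ y ∈ Set.Icc c₁ (c₁+1), HasDerivAt
      (fun z => (z+1)^(q-1) - 2*((z+0)^(q-1)) + (z+(-1))^(q-1))
      ((q-1)*(y+1)^(q-1-1) - 2*((q-1)*(y+0)^(q-1-1)) + (q-1)*(y+(-1))^(q-1-1)) y := by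
    intro y hy
    have h1 := hd_shift 1 (q-1) y (by have := hy.1; linarith)
    have h2 := hd_shift 0 (q-1) y (by have := hy.1; linarith)
    have h3 := hd_shift (-1) (q-1) y (by have := hy.1; linarith)
    exact (h1.sub (h2.const_mul 2)).add h3
  obtain ⟨c₂, hcc1, hcc2⟩ := mvt1 _ _ c₁
    (fun y hy => ((key2 y hy).continuousAt).continuousWithinAt)
    (fun y hy => key2 y (Set.mem_Icc.2 ⟨hy.1.le, hy.2.le⟩))
  have hc₂1 : 1 < c₂ := by have := hcc1.1; linarith
  -- step 3 : secdiff with exponent q-2 at c₂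
  obtain ⟨d, hd1, hd2, hd3⟩ := secdiff (q-2) c₂ hc₂1
  refine ⟨d, by linarith, ?_⟩
  simp only [add_zero] at hc2 hcc2
  have e2 : (c₂+1)^(q-2) - 2*c₂^(q-2) + (c₂-1)^(q-2) = (q-2)*(q-3)*d^(q-4) := by
    rw [hd3]; ring_nf
  -- assemble
  rw [show (x + -1 : ℝ) = x - 1 by ring, show (x - 1 + 2 : ℝ) = x + 1 by ring,
      show (x - 1 + -1 : ℝ) = x - 2 by ring] at hc2
  rw [show (c₁ + -1 : ℝ) = c₁ - 1 by ring, show (c₁ + 1 + 1 : ℝ) = c₁ + 2 by ring,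
      show (c₁ + 1 + -1 : ℝ) = c₁ by ring, show (c₂ + -1 : ℝ) = c₂ - 1 by ring,
      show (q - 1 - 1 : ℝ) = q - 2 by ring] at hcc2
  have main1 : (x+2)^q - 4*(x+1)^q + 6*x^q - 4*(x-1)^q + (x-2)^q
      = q * ((c₁+2)^(q-1) - 3*((c₁+1)^(q-1)) + 3*(c₁^(q-1)) - (c₁-1)^(q-1)) := by
    linear_combination hc2
  have main2 : (c₁+2)^(q-1) - 3*((c₁+1)^(q-1)) + 3*(c₁^(q-1)) - (c₁-1)^(q-1)
      = (q-1) * ((c₂+1)^(q-2) - 2*(c₂^(q-2)) + (c₂-1)^(q-2)) := by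
    linear_combination hcc2
  rw [main1, main2, e2]; ring

noncomputable def Dd (α x : ℝ) : ℝ := (x+1)^α - 2*x^α + (x-1)^α

lemma Dd_abs (α : ℝ) (h0 : 0 < α) (h2 : α < 2) (x : ℝ) (hx : 1 < x) :
    |Dd α x| ≤ 2 * (x-1)^(α-2) := by
  obtain ⟨d, hd1, hd2, hd3⟩ := secdiff α x hx
  have hx1 : (0:ℝ) < x - 1 := by linarith
  have hd0 : (0:ℝ) < d := lt_trans hx1 hd1
  rw [show Dd α x = α * (α-1) * d^(α-2) from hd3]
  rw [abs_mul, abs_mul]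
  have h1 : |α| ≤ 2 := by rw [abs_of_pos h0]; linarith
  have h2' : |α - 1| ≤ 1 := abs_le.2 ⟨by linarith, by linarith⟩
  have h3 : |d ^ (α-2)| = d ^ (α-2) := abs_of_pos (Real.rpow_pos_of_pos hd0 _)
  rw [h3]
  have h4 : d ^ (α-2) ≤ (x-1)^(α-2) :=
    Real.rpow_le_rpow_of_nonpos hx1 hd1.le (by linarith)
  have h5 : |α| * |α - 1| ≤ 2 :=
    le_trans (mul_le_mul h1 h2' (abs_nonneg _) (by norm_num)) (by norm_num)
  calc |α| * |α-1| * d^(α-2) ≤ 2 * d^(α-2) :=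
        mul_le_mul_of_nonneg_right h5 (Real.rpow_pos_of_pos hd0 _).le
    _ ≤ 2 * (x-1)^(α-2) := by linarith

lemma rpow_nat_tendsto (β : ℝ) (hβ : β < 0) :
    Tendsto (fun n : ℕ => ((n:ℝ))^β) atTop (𝓝 0) := by
  have := (tendsto_rpow_neg_atTop (by linarith : (0:ℝ) < -β)).comp
    tendsto_natCast_atTop_atTop (α := ℕ)
  simpa [Function.comp_def] using this

lemma Dd_tendsto1 (α : ℝ) (h0 : 0 < α) (h2 : α < 2) :
    Tendsto (fun n : ℕ => Dd α ((n:ℝ)+1)) atTop (𝓝 0) := by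
  apply squeeze_zero_norm' (a := fun n : ℕ => 2 * ((n:ℝ))^(α-2))
  · filter_upwards [eventually_ge_atTop 1] with n hn
    have h1 : (1:ℝ) < (n:ℝ) + 1 := by
      have : (1:ℝ) ≤ (n:ℝ) := by exact_mod_cast hn
      linarith
    simpa using Dd_abs α h0 h2 ((n:ℝ)+1) h1
  · have := (rpow_nat_tendsto (α-2) (by linarith)).const_mul 2
    simpa using this

lemma Dd_tendsto2 (α : ℝ) (h0 : 0 < α) (h2 : α < 2) :
    Tendsto (fun n : ℕ => Dd α ((n:ℝ)+2)) atTop (𝓝 0) := by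
  have := (Dd_tendsto1 α h0 h2).comp (tendsto_add_atTop_nat 1)
  apply this.congr
  intro n
  simp only [Function.comp]
  push_cast
  ring_nf

noncomputable def Pf (α : ℝ) (n : ℕ) : ℝ :=
  -(1/2) * (((n:ℝ)+4)^α - 4*((n:ℝ)+3)^α + 6*((n:ℝ)+2)^α - 4*((n:ℝ)+1)^α + ((n:ℝ))^α)

lemma partial_tendsto (α : ℝ) (h0 : 0 < α) (h2 : α < 2) :
    Tendsto (fun N => ∑ n ∈ range N, Pf α n) atTop (𝓝 ((1/2)*(Dd α 2 - Dd α 1))) := by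
  set w : ℕ → ℝ := fun n => Dd α ((n:ℝ)+1) - Dd α ((n:ℝ)+2) with hw
  have hP : ∀ n, Pf α n = (1/2) * (w (n+1) - w n) := by
    intro n
    simp only [hw, Pf, Dd]
    push_cast
    ring
  have hsum : ∀ N, ∑ n ∈ range N, Pf α n = (1/2) * (w N - w 0) := by
    intro N
    rw [Finset.sum_congr rfl (fun n _ => hP n), ← Finset.mul_sum, Finset.sum_range_sub w]
  simp only [hsum]
  have hw0 : w 0 = Dd α 1 - Dd α 2 := by simp [hw]
  have hwt : Tendsto w atTop (𝓝 0) := by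
    have := (Dd_tendsto1 α h0 h2).sub (Dd_tendsto2 α h0 h2)
    simpa using this
  have := (hwt.sub_const (w 0)).const_mul (1/2)
  simpa [hw0, mul_sub] using this

lemma hasSum_Pf (α : ℝ) (h0 : 0 < α) (h2 : α < 2)
    (hsign : (∀ n, 0 ≤ Pf α n) ∨ (∀ n, Pf α n ≤ 0)) :
    HasSum (Pf α) ((1/2)*(Dd α 2 - Dd α 1)) := by
  rcases hsign with hs | hs
  · exact (hasSum_iff_tendsto_nat_of_nonneg hs _).2 (partial_tendsto α h0 h2)
  · have := (hasSum_iff_tendsto_nat_of_nonneg (f := fun n => -Pf α n)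
      (fun n => neg_nonneg.2 (hs n)) (-((1/2)*(Dd α 2 - Dd α 1)))).2 ?_
    · simpa using this.neg
    · have := (partial_tendsto α h0 h2).neg
      simpa [Finset.sum_neg_distrib] using this

-- 4^H = 2^(2H), 9^H = 3^(2H)
lemma four_eq (H : ℝ) : (4:ℝ)^H = (2:ℝ)^(2*H) := by
  rw [show (4:ℝ) = (2:ℝ)^(2:ℝ) by
      rw [show (2:ℝ) = ((2:ℕ):ℝ) from by norm_num, Real.rpow_natCast]; norm_num,
    ← Real.rpow_mul (by norm_num : (0:ℝ) ≤ 2)]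

lemma nine_eq (H : ℝ) : (9:ℝ)^H = (3:ℝ)^(2*H) := by
  rw [show (9:ℝ) = (3:ℝ)^(2:ℝ) by
      rw [show (2:ℝ) = ((2:ℕ):ℝ) from by norm_num, Real.rpow_natCast]; norm_num,
    ← Real.rpow_mul (by norm_num : (0:ℝ) ≤ 3)]

lemma four_lt (H : ℝ) (h1 : H < 1) : (4:ℝ)^H < 4 := by
  have := Real.rpow_lt_rpow_of_exponent_lt (by norm_num : (1:ℝ) < 4) h1
  rwa [Real.rpow_one] at this

lemma four_half : (4:ℝ)^(1/2:ℝ) = 2 := by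
  rw [four_eq, show (2:ℝ)*(1/2) = 1 by norm_num, Real.rpow_one]

lemma nine_half : (9:ℝ)^(1/2:ℝ) = 3 := by
  rw [nine_eq, show (2:ℝ)*(1/2) = 1 by norm_num, Real.rpow_one]

lemma four_le_two (H : ℝ) (h : H ≤ 1/2) (h0 : 0 < H) : (4:ℝ)^H ≤ 2 := by
  have := Real.rpow_le_rpow_of_exponent_le (by norm_num : (1:ℝ) ≤ 4) h
  rwa [four_half] at this

lemma one_le_nine (H : ℝ) (h0 : 0 ≤ H) : (1:ℝ) ≤ (9:ℝ)^H := by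
  have := Real.rpow_le_rpow_of_exponent_le (by norm_num : (1:ℝ) ≤ 9) h0
  rwa [Real.rpow_zero] at this

-- key sign: 7 - 4·4^H + 9^H ≥ 0 for H ∈ (0,1)
lemma seven_sign (H : ℝ) (h0 : 0 < H) (h1 : H < 1) :
    0 ≤ 7 - 4*(4:ℝ)^H + (9:ℝ)^H := by
  rcases le_or_gt H (1/2) with hc | hc
  · have := four_le_two H hc h0
    have := one_le_nine H h0.le
    linarith
  · -- Bernoulli route : 9^H = (4^H)^β with β = log 9 / log 4
    set t := (4:ℝ)^H with ht
    set β := Real.log 9 / Real.log 4 with hβ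
    have hlog4 : (0:ℝ) < Real.log 4 := Real.log_pos (by norm_num)
    have htpos : 0 < t := Real.rpow_pos_of_pos (by norm_num) H
    have ht4 : t < 4 := four_lt H h1
    have ht2 : 2 ≤ t := by
      have := Real.rpow_le_rpow_of_exponent_le (by norm_num : (1:ℝ) ≤ 4) hc.le
      rw [four_half] at this
      exact this
    have hβ1 : 1 ≤ β := by
      rw [hβ, le_div_iff₀ hlog4, one_mul]
      exact Real.log_le_log (by norm_num) (by norm_num)
    have hβ169 : β ≤ 16/9 := by
      rw [hβ, div_le_iff₀ hlog4]
      have : Real.log (9^(9:ℕ)) ≤ Real.log (4^(16:ℕ)) :=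
        Real.log_le_log (by positivity) (by norm_num)
      rw [Real.log_pow, Real.log_pow] at this
      push_cast at this
      linarith
    have hs : (9:ℝ)^H = t^β := by
      rw [ht, ← Real.rpow_mul (by norm_num : (0:ℝ) ≤ 4)]
      rw [Real.rpow_def_of_pos (by norm_num : (0:ℝ) < 4),
        Real.rpow_def_of_pos (by norm_num : (0:ℝ) < 9)]
      congr 1
      rw [hβ]
      field_simp
    -- t^β = 9 * (t/4)^β ≥ 9 * (1 + β*(t/4 - 1))
    have h4β : (4:ℝ)^β = 9 := by
      rw [hβ, Real.rpow_def_of_pos (by norm_num : (0:ℝ) < 4), mul_comm,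
        div_mul_cancel₀ _ hlog4.ne', Real.exp_log (by norm_num)]
    have hsplit : t^β = 9 * (t/4)^β := by
      rw [← h4β, ← Real.mul_rpow (by norm_num) (by positivity)]
      congr 1
      field_simp
    have hbern : (1 + β * (t/4 - 1)) ≤ (t/4)^β := by
      have := one_add_mul_self_le_rpow_one_add
        (s := t/4 - 1) (by linarith) hβ1
      rwa [show (1 + (t/4 - 1)) = t/4 by ring] at this
    have h9pos : (0:ℝ) < 9 := by norm_num
    have : 9 * (1 + β * (t/4 - 1)) ≤ t^β := by
      rw [hsplit]; nlinarith [hbern]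
    rw [hs]
    nlinarith [this, hβ169, ht4, hβ1]

lemma rpow_exp_convex (a x y lam : ℝ) (ha : 0 < a) (h0 : 0 ≤ lam) (h1 : lam ≤ 1) :
    a ^ ((1-lam)*x + lam*y) ≤ (1-lam) * a^x + lam * a^y := by
  have h := convexOn_exp.2 (Set.mem_univ (Real.log a * x)) (Set.mem_univ (Real.log a * y))
    (by linarith : (0:ℝ) ≤ 1 - lam) h0 (by ring)
  simp only [smul_eq_mul] at h
  rw [Real.rpow_def_of_pos ha, Real.rpow_def_of_pos ha, Real.rpow_def_of_pos ha]
  calc Real.exp (Real.log a * ((1-lam)*x + lam*y))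
      = Real.exp ((1-lam) * (Real.log a * x) + lam * (Real.log a * y)) := by ring_nf
    _ ≤ (1-lam) * Real.exp (Real.log a * x) + lam * Real.exp (Real.log a * y) := h

lemma bound83 (H : ℝ) (h0 : 0 < H) (hc : H ≤ 1/2) :
    6*(9:ℝ)^H + 10 ≤ 16*(4:ℝ)^H := by
  have h4pos : (0:ℝ) < (4:ℝ)^H := Real.rpow_pos_of_pos (by norm_num) H
  have e1 : (9/4:ℝ)^H ≤ 1 + H := by
    have := rpow_exp_convex (9/4) 0 (1/2) (2*H) (by norm_num) (by linarith) (by linarith)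
    rw [show ((1-2*H)*0 + 2*H*(1/2)) = H by ring, Real.rpow_zero] at this
    have h94 : (9/4:ℝ)^(1/2:ℝ) = 3/2 := by
      rw [Real.div_rpow (by norm_num) (by norm_num), four_half, nine_half]
    rw [h94] at this
    linarith
  have e2 : (1/4:ℝ)^H ≤ 1 - H := by
    have := rpow_exp_convex (1/4) 0 (1/2) (2*H) (by norm_num) (by linarith) (by linarith)
    rw [show ((1-2*H)*0 + 2*H*(1/2)) = H by ring, Real.rpow_zero] at this
    have h14 : (1/4:ℝ)^(1/2:ℝ) = 1/2 := by
      rw [Real.div_rpow (by norm_num) (by norm_num), four_half, Real.one_rpow]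
    rw [h14] at this
    linarith
  have e1' : (9:ℝ)^H ≤ (1+H) * (4:ℝ)^H := by
    rw [Real.div_rpow (by norm_num) (by norm_num)] at e1
    rw [div_le_iff₀ h4pos] at e1
    linarith
  have e2' : (1:ℝ) ≤ (1-H) * (4:ℝ)^H := by
    rw [Real.div_rpow (by norm_num) (by norm_num), Real.one_rpow] at e2
    rw [div_le_iff₀ h4pos] at e2
    linarith
  nlinarith [h4pos]

lemma Pf_eq (α : ℝ) (hα0 : 0 < α) (n : ℕ) :
    ∃ d, 0 < d ∧ Pf α n = -(1/2)*(α*(α-1)*(α-2)*(α-3)*d^(α-4)) := by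
  obtain ⟨d, hd0, hd⟩ := fourthdiff α ((n:ℝ)+2) hα0
    (by have : (0:ℝ) ≤ (n:ℝ) := n.cast_nonneg; linarith)
  refine ⟨d, hd0, ?_⟩
  rw [show (n:ℝ)+2+2 = (n:ℝ)+4 by ring, show (n:ℝ)+2+1 = (n:ℝ)+3 by ring,
    show (n:ℝ)+2-1 = (n:ℝ)+1 by ring, show (n:ℝ)+2-2 = (n:ℝ) by ring] at hd
  rw [Pf]
  linear_combination (-(1/2 : ℝ)) * hd

set_option maxHeartbeats 1000000 in
lemma main_tsum (H : ℝ) (h0 : 0 < H) (h1 : H < 1) (p : ℤ → ℝ)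
    (hp : ∀ j : ℤ, p j = -(1/2)*(6*|(j:ℝ)|^(2*H) - 4*(|(j:ℝ)-1|^(2*H) + |(j:ℝ)+1|^(2*H))
        + (|(j:ℝ)-2|^(2*H) + |(j:ℝ)+2|^(2*H)))) :
    (H ≤ 1/2 → ∑' j : ℤ, |p j / p 0| = 1 + (10 - 7*(4:ℝ)^H + 2*(9:ℝ)^H)/(4 - (4:ℝ)^H))
    ∧ (1/2 ≤ H → ∑' j : ℤ, |p j / p 0| = 2) := by
  have hα0 : 0 < 2*H := by linarith
  have hα2 : 2*H < 2 := by linarith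
  set t := (4:ℝ)^H with htdef
  set s := (9:ℝ)^H with hsdef
  have h2α : (2:ℝ)^(2*H) = t := (four_eq H).symm
  have h3α : (3:ℝ)^(2*H) = s := (nine_eq H).symm
  have ht4 : t < 4 := four_lt H h1
  have hπ0 : (0:ℝ) < 4 - t := by linarith
  have hp0 : p 0 = 4 - t := by
    rw [hp 0]
    push_cast
    norm_num
    rw [Real.zero_rpow hα0.ne', h2α]
    ring
  have hp1 : p 1 = -(1/2)*(7 - 4*t + s) := by
    rw [hp 1]
    push_cast
    norm_num
    rw [Real.zero_rpow hα0.ne', h2α, h3α]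
    ring
  have hpn : ∀ n : ℕ, p ((n:ℤ)+2) = Pf (2*H) n := by
    intro n
    rw [hp ((n:ℤ)+2), Pf]
    push_cast
    have e0 : |(n:ℝ)+2| = (n:ℝ)+2 := abs_of_nonneg (by positivity)
    have e1 : |(n:ℝ)+2-1| = (n:ℝ)+1 := by
      rw [show (n:ℝ)+2-1 = (n:ℝ)+1 by ring]; exact abs_of_nonneg (by positivity)
    have e2 : |(n:ℝ)+2+1| = (n:ℝ)+3 := by
      rw [show (n:ℝ)+2+1 = (n:ℝ)+3 by ring]; exact abs_of_nonneg (by positivity)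
    have e3 : |(n:ℝ)+2-2| = (n:ℝ) := by
      rw [show (n:ℝ)+2-2 = (n:ℝ) by ring]; exact abs_of_nonneg n.cast_nonneg
    have e4 : |(n:ℝ)+2+2| = (n:ℝ)+4 := by
      rw [show (n:ℝ)+2+2 = (n:ℝ)+4 by ring]; exact abs_of_nonneg (by positivity)
    rw [e0, e1, e2, e3, e4]
    ring
  have hpeven : ∀ j : ℤ, p (-j) = p j := by
    intro j
    rw [hp (-j), hp j]
    push_cast
    rw [abs_neg,
      show -(j:ℝ)-1 = -((j:ℝ)+1) by ring, abs_neg,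
      show -(j:ℝ)+1 = -((j:ℝ)-1) by ring, abs_neg,
      show -(j:ℝ)-2 = -((j:ℝ)+2) by ring, abs_neg,
      show -(j:ℝ)+2 = -((j:ℝ)-2) by ring, abs_neg]
    ring
  -- derived facts
  have hp0ne : p 0 ≠ 0 := by rw [hp0]; exact hπ0.ne'
  have hf0 : |p (0:ℤ) / p 0| = 1 := by rw [div_self hp0ne, abs_one]
  have hsev := seven_sign H h0 h1
  have hf1 : |p (1:ℤ) / p 0| = ((1/2)*(7 - 4*t + s))/(4 - t) := by
    rw [abs_div, hp0, abs_of_pos hπ0, hp1,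
      abs_of_nonpos (by nlinarith : -(1/2)*(7-4*t+s) ≤ 0)]
    ring_nf
  have hDd2 : Dd (2*H) 2 = s - 2*t + 1 := by
    rw [Dd]
    norm_num
    rw [h2α, h3α]
  have hDd1 : Dd (2*H) 1 = t - 2 := by
    rw [Dd]
    norm_num
    rw [Real.zero_rpow hα0.ne', h2α]
    ring
  set C : ℝ := ((1/2)*(7 - 4*t + s))/(4 - t) with hC
  have key : ∀ L : ℝ, HasSum (fun n : ℕ => |p ((n:ℤ)+2) / p 0|) L →
      ∑' j : ℤ, |p j / p 0| = 2*(L + (1 + C)) - 1 := by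
    intro L hL
    set A : ℝ := L + (1 + C) with hA
    have h2 : HasSum (fun n : ℕ => |p (n:ℤ) / p 0|) A := by
      have hcast : (fun n : ℕ => |p ((↑(n+2):ℤ)) / p 0|)
          = fun n : ℕ => |p ((n:ℤ)+2) / p 0| := by
        funext n; norm_cast
      have := (hasSum_nat_add_iff (f := fun n : ℕ => |p (n:ℤ) / p 0|) 2).1
        (by rw [hcast]; exact hL)
      convert this using 1
      · rfl
      rw [Finset.sum_range_succ, Finset.sum_range_one]
      have c0 : ((0:ℕ):ℤ) = (0:ℤ) := rfl
      have c1 : ((1:ℕ):ℤ) = (1:ℤ) := rfl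
      rw [c0, c1, hf0, hf1, hA]
    have h3 : HasSum (fun n : ℕ => |p (-((n:ℤ)+1)) / p 0|) (A - 1) := by
      have heq : (fun n : ℕ => |p (-((n:ℤ)+1)) / p 0|)
          = fun n : ℕ => |p ((↑(n+1):ℤ)) / p 0| := by
        funext n
        rw [hpeven ((n:ℤ)+1)]
        norm_cast
      rw [heq]
      apply (hasSum_nat_add_iff (f := fun n : ℕ => |p (n:ℤ) / p 0|) 1).2
      convert h2 using 1
      · rfl
      rw [Finset.sum_range_one]
      have c0 : ((0:ℕ):ℤ) = (0:ℤ) := rfl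
      rw [c0, hf0]
      ring
    have total : HasSum (fun j : ℤ => |p j / p 0|) (A + (A - 1)) :=
      HasSum.of_nat_of_neg_add_one h2 h3
    rw [total.tsum_eq]
    ring
  constructor
  · -- H ≤ 1/2
    intro hc
    have hsign : ∀ n, 0 ≤ Pf (2*H) n := by
      intro n
      obtain ⟨d, hd0, hdeq⟩ := Pf_eq (2*H) hα0 n
      have k3 : 0 < d^(2*H-4) := Real.rpow_pos_of_pos hd0 _
      have k1 : (2*H)*(2*H-1) ≤ 0 := by nlinarith
      have k2 : (0:ℝ) < (2*H-2)*(2*H-3) := by nlinarith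
      have k4 : (2*H)*(2*H-1)*((2*H-2)*(2*H-3)) ≤ 0 := by nlinarith [mul_nonneg k2.le k2.le]
      have k5 : (2*H)*(2*H-1)*(2*H-2)*(2*H-3)*d^(2*H-4) ≤ 0 := by nlinarith [mul_nonpos_iff.2 (Or.inr ⟨k4, k3.le⟩)]
      rw [hdeq]; linarith
    have hsPf := hasSum_Pf (2*H) hα0 hα2 (Or.inl hsign)
    have hfun : (fun n : ℕ => |p ((n:ℤ)+2) / p 0|) = fun n => Pf (2*H) n / (4-t) := by
      funext n
      rw [hpn n, hp0, abs_div, abs_of_pos hπ0, abs_of_nonneg (hsign n)]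
    have hS2 : HasSum (fun n : ℕ => |p ((n:ℤ)+2) / p 0|) (((1/2)*(s - 3*t + 3))/(4-t)) := by
      rw [hfun]
      convert hsPf.div_const (4-t) using 1
      · rfl
      rw [hDd2, hDd1]; ring
    rw [key _ hS2, hC]
    simp only [div_eq_mul_inv]
    ring
  · -- 1/2 ≤ H
    intro hc
    have hsign : ∀ n, Pf (2*H) n ≤ 0 := by
      intro n
      obtain ⟨d, hd0, hdeq⟩ := Pf_eq (2*H) hα0 n
      have k3 : 0 < d^(2*H-4) := Real.rpow_pos_of_pos hd0 _
      have k1 : 0 ≤ (2*H)*(2*H-1) := by nlinarith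
      have k2 : (0:ℝ) < (2*H-2)*(2*H-3) := by nlinarith
      have k4 : 0 ≤ (2*H)*(2*H-1)*((2*H-2)*(2*H-3)) := mul_nonneg k1 k2.le
      have k5 : 0 ≤ (2*H)*(2*H-1)*(2*H-2)*(2*H-3)*d^(2*H-4) := by nlinarith [mul_nonneg k4 k3.le]
      rw [hdeq]; linarith
    have hsPf := hasSum_Pf (2*H) hα0 hα2 (Or.inr hsign)
    have hfun : (fun n : ℕ => |p ((n:ℤ)+2) / p 0|) = fun n => -(Pf (2*H) n / (4-t)) := by
      funext n
      rw [hpn n, hp0, abs_div, abs_of_pos hπ0, abs_of_nonpos (hsign n)]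
      ring
    have hS2 : HasSum (fun n : ℕ => |p ((n:ℤ)+2) / p 0|) (-(((1/2)*(s - 3*t + 3))/(4-t))) := by
      rw [hfun]
      convert (hsPf.div_const (4-t)).neg using 1
      · rfl
      rw [hDd2, hDd1]; ring
    rw [key _ hS2, hC]
    simp only [div_eq_mul_inv]
    linear_combination mul_inv_cancel₀ hπ0.ne'


/-- For the second-order increment filter `a = (1,-2,1)` and `H ∈ (0,1/2]`, the
ℓ¹-norm of the correlation function equals
`1 + (10 - 7·4^H + 2·9^H)/(4 - 4^H)`; its supremum over `H ∈ (0,1)` is `8/3`,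
so that `κ^{i2} = 16/3`. -/
theorem stmt15 (a : ℕ → ℝ) (ha0 : a 0 = 1) (ha1 : a 1 = -2) (ha2 : a 2 = 1)
    (piH : ℝ → ℤ → ℝ)
    (hpi : ∀ H : ℝ, ∀ j : ℤ, piH H j =
      -(1 / 2) * ∑ q ∈ Finset.range 3, ∑ r ∈ Finset.range 3,
        a q * a r * |(q : ℝ) - (r : ℝ) + (j : ℝ)| ^ (2 * H))
    (ρ : ℝ → ℤ → ℝ) (hρ : ∀ H : ℝ, ∀ j : ℤ, ρ H j = piH H j / piH H 0) :
    (∀ H ∈ Set.Ioc (0 : ℝ) (1 / 2),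
      (∑' j : ℤ, |ρ H j|) =
        1 + (10 - 7 * (4 : ℝ) ^ H + 2 * (9 : ℝ) ^ H) / (4 - (4 : ℝ) ^ H)) ∧
    sSup {x : ℝ | ∃ H ∈ Set.Ioo (0 : ℝ) 1, x = ∑' j : ℤ, |ρ H j|} = 8 / 3 ∧
    2 * sSup {x : ℝ | ∃ H ∈ Set.Ioo (0 : ℝ) 1, x = ∑' j : ℤ, |ρ H j|} = 16 / 3 := by
  have pi_closed : ∀ H : ℝ, ∀ j : ℤ, piH H j =
      -(1/2)*(6*|(j:ℝ)|^(2*H) - 4*(|(j:ℝ)-1|^(2*H) + |(j:ℝ)+1|^(2*H))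
        + (|(j:ℝ)-2|^(2*H) + |(j:ℝ)+2|^(2*H))) := by
    intro H j
    rw [hpi]
    simp only [Finset.sum_range_succ, Finset.sum_range_zero, ha0, ha1, ha2]
    push_cast
    ring_nf
  have main : ∀ H : ℝ, 0 < H → H < 1 →
      (H ≤ 1/2 → (∑' j : ℤ, |ρ H j|)
          = 1 + (10 - 7*(4:ℝ)^H + 2*(9:ℝ)^H)/(4 - (4:ℝ)^H)) ∧
      (1/2 ≤ H → (∑' j : ℤ, |ρ H j|) = 2) := by
    intro H hh0 hh1
    have hmt := main_tsum H hh0 hh1 (piH H) (pi_closed H)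
    have heq : (∑' j : ℤ, |ρ H j|) = ∑' j : ℤ, |piH H j / piH H 0| :=
      tsum_congr (fun j => by rw [hρ])
    rw [heq]
    exact hmt
  have hub : ∀ H : ℝ, 0 < H → H < 1 → (∑' j : ℤ, |ρ H j|) ≤ 8/3 := by
    intro H hh0 hh1
    rcases le_or_gt H (1/2) with hc | hc
    · rw [(main H hh0 hh1).1 hc]
      have hb := bound83 H hh0 hc
      have hπ0 : (0:ℝ) < 4 - (4:ℝ)^H := by linarith [four_lt H hh1]
      have hdiv : (10 - 7*(4:ℝ)^H + 2*(9:ℝ)^H)/(4 - (4:ℝ)^H) ≤ 5/3 := by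
        rw [div_le_iff₀ hπ0]
        linarith
      linarith
    · rw [(main H hh0 hh1).2 hc.le]
      norm_num
  have hSup : sSup {x : ℝ | ∃ H ∈ Set.Ioo (0 : ℝ) 1, x = ∑' j : ℤ, |ρ H j|} = 8 / 3 := by
    apply csSup_eq_of_forall_le_of_forall_lt_exists_gt
    · exact ⟨2, ⟨1/2, ⟨by norm_num, by norm_num⟩,
        ((main (1/2) (by norm_num) (by norm_num)).2 le_rfl).symm⟩⟩
    · rintro x ⟨H, hH, rfl⟩
      exact hub H hH.1 hH.2
    · intro w hw
      set G : ℝ → ℝ := fun H => 1 + (10 - 7*(4:ℝ)^H + 2*(9:ℝ)^H)/(4 - (4:ℝ)^H) with hG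
      have c4 : Continuous (fun H : ℝ => (4:ℝ)^H) := by
        have : (fun H : ℝ => (4:ℝ)^H) = fun H => Real.exp (Real.log 4 * H) :=
          funext fun H => Real.rpow_def_of_pos (by norm_num) H
        rw [this]
        exact Real.continuous_exp.comp (continuous_const.mul continuous_id)
      have c9 : Continuous (fun H : ℝ => (9:ℝ)^H) := by
        have : (fun H : ℝ => (9:ℝ)^H) = fun H => Real.exp (Real.log 9 * H) :=
          funext fun H => Real.rpow_def_of_pos (by norm_num) H
        rw [this]
        exact Real.continuous_exp.comp (continuous_const.mul continuous_id)
      have hden : (4:ℝ) - (4:ℝ)^(0:ℝ) ≠ 0 := by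
        rw [Real.rpow_zero]; norm_num
      have hcont : ContinuousAt G 0 := by
        apply ContinuousAt.add continuousAt_const
        exact ContinuousAt.div
          ((continuousAt_const.sub (c4.continuousAt.const_mul 7)).add
            (c9.continuousAt.const_mul 2))
          (continuousAt_const.sub c4.continuousAt) hden
      have hG0 : G 0 = 8/3 := by
        rw [hG]
        simp only [Real.rpow_zero]
        norm_num
      have ht : Tendsto G (𝓝[>] (0:ℝ)) (𝓝 (8/3)) := by
        rw [← hG0]
        exact hcont.continuousWithinAt.tendsto
      have hev : ∀ᶠ H in 𝓝[>] (0:ℝ), w < G H := ht.eventually (lt_mem_nhds hw)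
      have hmem : Set.Ioc (0:ℝ) (1/2) ∈ 𝓝[>] (0:ℝ) :=
        Ioc_mem_nhdsGT_of_mem (by constructor <;> norm_num)
      obtain ⟨H, hwH, hHm⟩ := (hev.and (eventually_mem_set.2 hmem)).exists
      have hH1 : H < 1 := lt_of_le_of_lt hHm.2 (by norm_num)
      refine ⟨∑' j : ℤ, |ρ H j|, ⟨H, ⟨hHm.1, hH1⟩, rfl⟩, ?_⟩
      rw [(main H hHm.1 hH1).1 hHm.2]
      exact hwH
  refine ⟨?_, hSup, ?_⟩
  · intro H hH
    exact (main H hH.1 (lt_of_le_of_lt hH.2 (by norm_num))).1 hH.2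
  · rw [hSup]
    norm_num
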